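/- The diagonal embedding K^{M_{p×q}} → K^{M_{pq×pq}} (sending A to the function supported on 'diagonal' word pairs in the product alphabet) preserves complexity; consequently Rec_{p×q}(K) is a commutative ring under the pointwise product AB[U,W] = A[U,W]·B[U,W]. -/

import Mathlib

/-- The free monoid `M_{p×q}` of pairs of equal-length words. -/
def EqPair (p q : ℕ) : Type :=
  {x : List (Fin p) × List (Fin q) // x.1.length = x.2.length}

/-- The single-letter shift operator `ρ(s,t)`: `(ρ(s,t)A)[U,W] = A[Us,Wt]`. -/
def shiftL (p q : ℕ) (K : Type*) [Field K] (s : Fin p) (t : Fin q) :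
    (EqPair p q → K) →ₗ[K] (EqPair p q → K) where
  toFun A := fun x => A ⟨(x.1.1 ++ [s], x.1.2 ++ [t]), by simp [x.2]⟩
  map_add' _ _ := rfl
  map_smul' _ _ := rfl

/-- A subspace of `K^{M_{p×q}}` is recursively closed if it is stable under
all shift operators. -/
def RecClosed (p q : ℕ) (K : Type*) [Field K]
    (V : Submodule K (EqPair p q → K)) : Prop :=
  ∀ (s : Fin p) (t : Fin q), ∀ A ∈ V, shiftL p q K s t A ∈ V

/-- The recursive closure of `A`: the smallest recursively closed subspace
containing `A`. -/
def recClosure (p q : ℕ) (K : Type*) [Field K] (A : EqPair p q → K) :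
    Submodule K (EqPair p q → K) :=
  sInf {V | A ∈ V ∧ RecClosed p q K V}

/-- `A` is a recurrence matrix if its recursive closure is
finite-dimensional. -/
def IsRecMatrix (p q : ℕ) (K : Type*) [Field K] (A : EqPair p q → K) : Prop :=
  FiniteDimensional K (recClosure p q K A)

/-- The matrix product `(A·B)[U,W] = ∑_V A[U,V] B[V,W]`. -/
def matMul {p r q : ℕ} {K : Type*} [Field K]
    (A : EqPair p r → K) (B : EqPair r q → K) : EqPair p q → K :=
  fun x => ∑ V : Fin x.1.1.length → Fin r,
    A ⟨(x.1.1, List.ofFn V), by simp⟩ * B ⟨(List.ofFn V, x.1.2), by simp [x.2]⟩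

/-- The diagonal embedding `K^{M_{p×q}} → K^{M_{pq×pq}}`: identify letters of
the alphabet of size `pq` with pairs via `finProdFinEquiv`, and send `A` to
the function supported on diagonal word pairs `(C, C)`, with value
`A[U, W]` where `C` is the letterwise pairing of `U` and `W`. -/
def diagEmb (p q : ℕ) (K : Type*) [Field K] (A : EqPair p q → K) :
    EqPair (p * q) (p * q) → K :=
  fun y =>
    if y.1.1 = y.1.2 then
      A ⟨(y.1.1.map fun c => (finProdFinEquiv.symm c).1,
          y.1.1.map fun c => (finProdFinEquiv.symm c).2), by simp⟩
    else 0

section Aux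
variable {p q : ℕ} {K : Type*} [Field K]

lemma mem_recClosure_self (A : EqPair p q → K) : A ∈ recClosure p q K A :=
  Submodule.mem_sInf.2 fun _ hV => hV.1

lemma recClosed_recClosure (A : EqPair p q → K) :
    RecClosed p q K (recClosure p q K A) :=
  fun s t B hB => Submodule.mem_sInf.2 fun V hV =>
    hV.2 s t B (Submodule.mem_sInf.1 hB V hV)

lemma recClosure_le {A : EqPair p q → K} {V : Submodule K (EqPair p q → K)}
    (hA : A ∈ V) (hV : RecClosed p q K V) : recClosure p q K A ≤ V :=
  sInf_le ⟨hA, hV⟩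

/-- `diagEmb` as a linear map. -/
def diagL (p q : ℕ) (K : Type*) [Field K] :
    (EqPair p q → K) →ₗ[K] (EqPair (p * q) (p * q) → K) where
  toFun := diagEmb p q K
  map_add' A B := by
    funext y; simp only [diagEmb, Pi.add_apply]; split
    · rfl
    · simp
  map_smul' c A := by
    funext y; simp only [diagEmb, Pi.smul_apply, RingHom.id_apply]
    split
    · rfl
    · simp

lemma map_fst_zip (l1 : List (Fin p)) (l2 : List (Fin q)) (h : l1.length = l2.length) :
    (List.zipWith (fun u w => finProdFinEquiv (u, w)) l1 l2).map
      (fun c => (finProdFinEquiv.symm c).1) = l1 := by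
  induction l1 generalizing l2 with
  | nil => simp
  | cons a l ih =>
    cases l2 with
    | nil => simp at h
    | cons b l2 => simp [ih l2 (by simpa using h), -finProdFinEquiv_symm_apply]

lemma map_snd_zip (l1 : List (Fin p)) (l2 : List (Fin q)) (h : l1.length = l2.length) :
    (List.zipWith (fun u w => finProdFinEquiv (u, w)) l1 l2).map
      (fun c => (finProdFinEquiv.symm c).2) = l2 := by
  induction l1 generalizing l2 with
  | nil => cases l2 with
    | nil => simp
    | cons b l2 => simp at h
  | cons a l ih =>
    cases l2 with
    | nil => simp at h
    | cons b l2 => simp [ih l2 (by simpa using h), -finProdFinEquiv_symm_apply]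

lemma diagEmb_enc (A : EqPair p q → K) (x : EqPair p q) :
    diagEmb p q K A
      ⟨(List.zipWith (fun u w => finProdFinEquiv (u, w)) x.1.1 x.1.2,
        List.zipWith (fun u w => finProdFinEquiv (u, w)) x.1.1 x.1.2), rfl⟩ = A x := by
  unfold diagEmb
  rw [if_pos rfl]
  congr 1
  exact Subtype.ext (Prod.ext (map_fst_zip _ _ x.2) (map_snd_zip _ _ x.2))

lemma diagL_injective : Function.Injective (diagL p q K) := by
  intro A B h
  funext x
  rw [← diagEmb_enc A x, ← diagEmb_enc B x]
  exact congrFun h _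

lemma shift_diag_eq (A : EqPair p q → K) (s : Fin p) (t : Fin q) :
    shiftL (p * q) (p * q) K (finProdFinEquiv (s, t)) (finProdFinEquiv (s, t))
        (diagEmb p q K A) = diagEmb p q K (shiftL p q K s t A) := by
  funext y
  show (if y.1.1 ++ [finProdFinEquiv (s, t)] = y.1.2 ++ [finProdFinEquiv (s, t)]
      then _ else (0 : K)) = _
  rw [diagEmb]
  by_cases h : y.1.1 = y.1.2
  · rw [if_pos (by rw [h]), if_pos h]
    show A _ = A _
    congr 1
    apply Subtype.ext
    apply Prod.ext <;> simp [shiftL, -finProdFinEquiv_symm_apply]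
  · rw [if_neg (by simpa using h), if_neg h]

lemma shift_diag_ne (A : EqPair p q → K) (c c' : Fin (p * q)) (h : c ≠ c') :
    shiftL (p * q) (p * q) K c c' (diagEmb p q K A) = 0 := by
  funext y
  show (if y.1.1 ++ [c] = y.1.2 ++ [c'] then _ else (0 : K)) = 0
  rw [if_neg]
  intro hEq
  exact h (by simpa using (List.append_inj' hEq rfl).2)

lemma recClosure_diag (A : EqPair p q → K) :
    recClosure (p * q) (p * q) K (diagEmb p q K A) =
      Submodule.map (diagL p q K) (recClosure p q K A) := by
  apply le_antisymm
  · apply recClosure_le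
    · exact ⟨A, mem_recClosure_self A, rfl⟩
    · intro c c' B hB
      obtain ⟨f, hf, rfl⟩ := hB
      by_cases h : c = c'
      · subst h
        obtain ⟨⟨s, t⟩, rfl⟩ := finProdFinEquiv.surjective c
        exact ⟨shiftL p q K s t f, recClosed_recClosure A s t f hf,
          (shift_diag_eq f s t).symm⟩
      · show shiftL (p * q) (p * q) K c c' (diagEmb p q K f) ∈ _
        rw [shift_diag_ne f c c' h]
        exact Submodule.zero_mem _
  · rw [Submodule.map_le_iff_le_comap]
    apply recClosure_le
    · exact mem_recClosure_self (diagEmb p q K A)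
    · intro s t f hf
      rw [Submodule.mem_comap] at hf ⊢
      show diagEmb p q K _ ∈ _
      rw [← shift_diag_eq]
      exact recClosed_recClosure (diagEmb p q K A) _ _ _ hf

end Aux

/-- The diagonal embedding preserves complexity; consequently the recurrence
matrices form a commutative ring under the pointwise (Hadamard) product. -/
theorem diagEmb_preserves_complexity (p q : ℕ) (K : Type*) [Field K] :
    (∀ A : EqPair p q → K,
      Module.rank K (recClosure (p * q) (p * q) K (diagEmb p q K A)) =
        Module.rank K (recClosure p q K A)) ∧
    (∀ A B : EqPair p q → K, IsRecMatrix p q K A → IsRecMatrix p q K B →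
      IsRecMatrix p q K (fun x => A x * B x)) ∧
    (∀ A B : EqPair p q → K, (fun x => A x * B x) = (fun x => B x * A x)) := by
  refine ⟨?_, ?_, fun A B => funext fun x => mul_comm _ _⟩
  · intro A
    rw [recClosure_diag]
    exact (LinearEquiv.rank_eq
      (Submodule.equivMapOfInjective (diagL p q K) diagL_injective
        (recClosure p q K A))).symm
  · intro A B hA hB
    have hAB : (fun x => A x * B x) = A * B := rfl
    rw [IsRecMatrix, hAB]
    set W : Submodule K (EqPair p q → K) := recClosure p q K A * recClosure p q K B with hW
    have hmem : A * B ∈ W :=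
      Submodule.mul_mem_mul (mem_recClosure_self A) (mem_recClosure_self B)
    have hclosed : RecClosed p q K W := by
      intro s t C hC
      have hle : W ≤ Submodule.comap (shiftL p q K s t) W := by
        rw [hW, Submodule.mul_le]
        intro f hf g hg
        rw [Submodule.mem_comap]
        have : shiftL p q K s t (f * g) = shiftL p q K s t f * shiftL p q K s t g := rfl
        rw [this]
        exact Submodule.mul_mem_mul (recClosed_recClosure A s t f hf)
          (recClosed_recClosure B s t g hg)
      exact hle hC
    have hle : recClosure p q K (A * B) ≤ W := recClosure_le hmem hclosed
    have hWfin : FiniteDimensional K W := by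
      rw [← Submodule.fg_iff_finiteDimensional]
      exact Submodule.FG.mul ((Submodule.fg_iff_finiteDimensional _).2 hA)
        ((Submodule.fg_iff_finiteDimensional _).2 hB)
    exact Submodule.finiteDimensional_of_le hle
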